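/- Let 0 < μ_min ≤ μ_max and define b'' = (μ_max + μ_min)/μ_min². For all μ, μ' ∈ [μ_min, μ_max], the total variation of the function x ↦ B(x;μ) − B(x;μ') over [0,∞), which equals ∫₀^∞ |μ·e^{−μx} − μ'·e^{−μ'x}| dx, is at most b''·|μ − μ'|. -/

import Mathlib

open Set MeasureTheory

lemma exp_lip_aux (m a b : ℝ) (ha : m ≤ a) (hb : m ≤ b) :
    |Real.exp (-a) - Real.exp (-b)| ≤ Real.exp (-m) * |a - b| := by
  wlog h : b ≤ a with H
  · rw [abs_sub_comm, abs_sub_comm a b]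
    exact H m b a hb ha (le_of_not_ge h)
  · have h1 : Real.exp (-a) ≤ Real.exp (-b) := Real.exp_le_exp.mpr (by linarith)
    have h2 : Real.exp (-b) ≤ Real.exp (-m) := Real.exp_le_exp.mpr (by linarith)
    have h3 : (b - a) + 1 ≤ Real.exp (b - a) := Real.add_one_le_exp _
    have h4 : Real.exp (-a) = Real.exp (-b) * Real.exp (b - a) := by
      rw [← Real.exp_add]; ring_nf
    have h5 : 0 < Real.exp (-b) := Real.exp_pos _
    rw [abs_of_nonpos (by linarith), abs_of_nonneg (by linarith)]
    nlinarith

theorem exp_cdf_total_variation_in_rate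
    (μmin μmax : ℝ) (hμmin : 0 < μmin) (hle : μmin ≤ μmax)
    (μ μ' : ℝ) (hμ : μ ∈ Icc μmin μmax) (hμ' : μ' ∈ Icc μmin μmax) :
    ∫ x in Ioi (0:ℝ), |μ * Real.exp (-μ * x) - μ' * Real.exp (-μ' * x)| ≤
      ((μmax + μmin) / μmin ^ 2) * |μ - μ'| := by
  obtain ⟨hμ1, hμ2⟩ := hμ
  obtain ⟨hμ'1, hμ'2⟩ := hμ'
  have hμpos : 0 < μ := lt_of_lt_of_le hμmin hμ1
  have hμ'pos : 0 < μ' := lt_of_lt_of_le hμmin hμ'1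
  set c := |μ - μ'| with hc
  have hcnn : 0 ≤ c := abs_nonneg _
  -- integrability of LHS
  have hfint : IntegrableOn
      (fun x => |μ * Real.exp (-μ * x) - μ' * Real.exp (-μ' * x)|) (Ioi (0:ℝ)) := by
    exact (((exp_neg_integrableOn_Ioi 0 hμpos).const_mul μ).sub
      ((exp_neg_integrableOn_Ioi 0 hμ'pos).const_mul μ')).abs
  -- integrability of bound
  have hg1 : IntegrableOn (fun x => Real.exp (-μmin * x)) (Ioi (0:ℝ)) :=
    exp_neg_integrableOn_Ioi 0 hμmin
  have hg2 : IntegrableOn (fun x => x * Real.exp (-μmin * x)) (Ioi (0:ℝ)) := by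
    have h := integrableOn_rpow_mul_exp_neg_mul_rpow
      (by norm_num : (-1:ℝ) < 1) (zero_lt_one : (0:ℝ) < 1) hμmin
    refine h.congr_fun (fun x hx => ?_) measurableSet_Ioi
    simp only [Real.rpow_one]
  have hgint : IntegrableOn
      (fun x => (Real.exp (-μmin * x) + μmax * (x * Real.exp (-μmin * x))) * c)
      (Ioi (0:ℝ)) := (hg1.add (hg2.const_mul μmax)).mul_const c
  -- pointwise bound
  have hmono : ∀ x ∈ Ioi (0:ℝ),
      |μ * Real.exp (-μ * x) - μ' * Real.exp (-μ' * x)| ≤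
        (Real.exp (-μmin * x) + μmax * (x * Real.exp (-μmin * x))) * c := by
    intro x hx
    have hx0 : 0 < x := hx
    have key : μ * Real.exp (-μ * x) - μ' * Real.exp (-μ' * x)
        = (μ - μ') * Real.exp (-μ * x) + μ' * (Real.exp (-μ * x) - Real.exp (-μ' * x)) := by
      ring
    have e1 : Real.exp (-μ * x) ≤ Real.exp (-μmin * x) := by
      apply Real.exp_le_exp.mpr; nlinarith
    have e2 : |Real.exp (-(μ * x)) - Real.exp (-(μ' * x))| ≤
        Real.exp (-(μmin * x)) * |μ * x - μ' * x| := by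
      apply exp_lip_aux <;> nlinarith
    have e3 : |μ * x - μ' * x| = c * x := by
      rw [hc, ← sub_mul, abs_mul, abs_of_pos hx0]
    have epos : 0 < Real.exp (-μmin * x) := Real.exp_pos _
    have b1 : |(μ - μ') * Real.exp (-μ * x)| ≤ c * Real.exp (-μmin * x) := by
      rw [abs_mul, abs_of_pos (Real.exp_pos _), ← hc]
      exact mul_le_mul_of_nonneg_left e1 hcnn
    have b2 : |μ' * (Real.exp (-μ * x) - Real.exp (-μ' * x))| ≤
        μ' * (Real.exp (-μmin * x) * (c * x)) := by
      rw [abs_mul, abs_of_pos hμ'pos]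
      refine mul_le_mul_of_nonneg_left ?_ hμ'pos.le
      rw [e3] at e2
      simpa only [neg_mul] using e2
    calc |μ * Real.exp (-μ * x) - μ' * Real.exp (-μ' * x)|
        ≤ |(μ - μ') * Real.exp (-μ * x)|
          + |μ' * (Real.exp (-μ * x) - Real.exp (-μ' * x))| := by
          rw [key]; exact abs_add_le _ _
      _ ≤ c * Real.exp (-μmin * x) + μ' * (Real.exp (-μmin * x) * (c * x)) :=
          add_le_add b1 b2
      _ ≤ (Real.exp (-μmin * x) + μmax * (x * Real.exp (-μmin * x))) * c := by
          nlinarith [mul_nonneg (mul_nonneg (sub_nonneg.mpr hμ'2) hx0.le)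
            (mul_nonneg epos.le hcnn)]
  have step := setIntegral_mono_on hfint hgint measurableSet_Ioi hmono
  refine step.trans ?_
  -- compute the integral of the bound
  have I1 : ∫ x in Ioi (0:ℝ), Real.exp (-μmin * x) = 1 / μmin := by
    have h := Real.integral_rpow_mul_exp_neg_mul_Ioi (a := 1) (r := μmin) one_pos hμmin
    simp only [sub_self, Real.rpow_zero, one_mul, Real.rpow_one, Real.Gamma_one,
      mul_one, neg_mul] at h ⊢
    exact h
  have I2 : ∫ x in Ioi (0:ℝ), x * Real.exp (-μmin * x) = 1 / μmin ^ 2 := by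
    have h := Real.integral_rpow_mul_exp_neg_mul_Ioi (a := 2) (r := μmin) two_pos hμmin
    have : ∫ t in Ioi (0:ℝ), t ^ ((2:ℝ) - 1) * Real.exp (-(μmin * t))
        = ∫ x in Ioi (0:ℝ), x * Real.exp (-μmin * x) := by
      apply setIntegral_congr_fun measurableSet_Ioi
      intro t ht
      norm_num [Real.rpow_one, neg_mul]
    rw [this] at h
    rw [h, Real.Gamma_two, mul_one]
    rw [show ((2:ℝ) = ((2:ℕ):ℝ)) by norm_num, Real.rpow_natCast]
    rw [div_pow, one_pow]
  rw [MeasureTheory.integral_mul_const,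
    MeasureTheory.integral_add hg1 (hg2.const_mul μmax),
    MeasureTheory.integral_const_mul, I1, I2]
  have : 1 / μmin + μmax * (1 / μmin ^ 2) = (μmax + μmin) / μmin ^ 2 := by
    field_simp; ring
  rw [this]
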